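/- arXiv:2208.05288 — 2 statements merged into one kernel-verified Lean document; each statement's English description precedes it below -/
import Mathlib

section
/- Tennenbaum's partial order ℙ_T has property K (is Knaster): every uncountable set of conditions in ℙ_T contains an uncountable subset whose elements are pairwise compatible (any two have a common extension). Here ℙ_T consists of all pairs (t, r) where t ⊆ ω₁ is finite and r is a strict partial order on t contained in the usual ordinal order (α r β implies α < β) such that (t, r) is a tree, meaning the set of r-predecessors of each element of t is linearly ordered by r; and (t₁, r₁) extends (t₂, r₂) if and only if t₂ ⊆ t₁ and r₂ = r₁ ∩ (t₂ × t₂). -/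
/-- The first uncountable cardinal, as an ordinal. -/
noncomputable def omegaOne : Ordinal.{0} := (Cardinal.aleph 1).ord

/-- A condition of Tennenbaum's forcing: a finite set `t ⊆ ω₁` together with a strict
partial order `r` on `t` contained in the usual ordinal order, such that `(t, r)` is a
tree, i.e. the `r`-predecessors of every element are linearly ordered by `r`. -/
structure TennCond : Type 1 where
  t : Finset Ordinal.{0}
  r : Ordinal.{0} → Ordinal.{0} → Prop
  mem_lt : ∀ α ∈ t, α < omegaOne
  r_mem : ∀ α β, r α β → α ∈ t ∧ β ∈ t ∧ α < β
  r_trans : ∀ α β γ, r α β → r β γ → r α γ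
  r_tree : ∀ β α γ, r α β → r γ β → α = γ ∨ r α γ ∨ r γ α

/-- `p` extends `q` in Tennenbaum's forcing: `q.t ⊆ p.t` and the order of `q` is the
restriction of the order of `p` to `q.t`. -/
def TennExt (p q : TennCond) : Prop :=
  q.t ⊆ p.t ∧ ∀ α β, q.r α β ↔ (p.r α β ∧ α ∈ q.t ∧ β ∈ q.t)

/-- Two conditions are compatible if they have a common extension. -/
def TennCompat (p q : TennCond) : Prop := ∃ s, TennExt s p ∧ TennExt s q

open Set Classical

/- ### Auxiliary lemmas -/

lemma countable_of_injOn_image {α β : Type u} {f : α → β} {s : Set α}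
    (h : Set.InjOn f s) (hc : (f '' s).Countable) : s.Countable := by
  rw [← Cardinal.le_aleph0_iff_set_countable] at hc ⊢
  rwa [Cardinal.mk_image_eq_of_injOn f s h] at hc

lemma countable_Iio_of_lt_omegaOne {ρ : Ordinal.{0}} (h : ρ < omegaOne) :
    (Set.Iio ρ).Countable := by
  rw [Cardinal.countable_iff_lt_aleph_one, Ordinal.mk_Iio_ordinal]
  have hlt : ρ.card < Cardinal.aleph 1 := Cardinal.lt_ord.mp h
  calc Cardinal.lift.{1} ρ.card < Cardinal.lift.{1} (Cardinal.aleph 1) :=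
        Cardinal.lift_lt.mpr hlt
    _ = _ := by rw [Cardinal.lift_aleph]; simp

lemma TennCond.ext' {p q : TennCond} (ht : p.t = q.t) (hr : p.r = q.r) : p = q := by
  cases p; cases q; cases ht; cases hr; rfl

/-- The trace of a condition on a finite set. -/
noncomputable def trace (s : Finset Ordinal.{0}) (p : TennCond) :
    Finset (Ordinal.{0} × Ordinal.{0}) :=
  @Finset.filter _ (fun ab => p.r ab.1 ab.2) (Classical.decPred _) (s ×ˢ s)

lemma mem_trace {s : Finset Ordinal.{0}} {p : TennCond} {a b : Ordinal.{0}} :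
    (a, b) ∈ trace s p ↔ (a ∈ s ∧ b ∈ s) ∧ p.r a b := by
  simp [trace, Finset.mem_filter, Finset.mem_product]

/-- Conditions with a fixed support form a countable (indeed finite) set. -/
lemma fiber_countable (t : Finset Ordinal.{0}) : {p : TennCond | p.t = t}.Countable := by
  have hinj : Set.InjOn (trace t) {p : TennCond | p.t = t} := by
    intro p hp q hq h
    refine TennCond.ext' (hp.trans hq.symm) ?_
    funext a b
    apply propext
    constructor
    · intro hr
      obtain ⟨ha, hb, _⟩ := p.r_mem a b hr
      have : (a, b) ∈ trace t p := mem_trace.mpr ⟨⟨hp ▸ ha, hp ▸ hb⟩, hr⟩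
      exact (mem_trace.mp (h ▸ this)).2
    · intro hr
      obtain ⟨ha, hb, _⟩ := q.r_mem a b hr
      have : (a, b) ∈ trace t q := mem_trace.mpr ⟨⟨hq ▸ ha, hq ▸ hb⟩, hr⟩
      exact (mem_trace.mp (h ▸ this)).2
  apply countable_of_injOn_image hinj
  apply Set.Countable.mono ?_ ((t ×ˢ t).powerset : Finset _).finite_toSet.countable
  rintro S ⟨p, _, rfl⟩
  simp only [Finset.coe_powerset, Set.mem_preimage, Set.mem_powerset_iff]
  intro ab hab
  rcases ab with ⟨a, b⟩
  exact Finset.mem_product.mpr (mem_trace.mp hab).1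

lemma image_t_uncountable {S : Set TennCond} (h : ¬ S.Countable) :
    ¬ ((fun p => p.t) '' S).Countable := by
  intro hc
  apply h
  have : S ⊆ ⋃ t ∈ (fun p : TennCond => p.t) '' S, {p : TennCond | p.t = t} := by
    intro p hp
    exact Set.mem_biUnion (Set.mem_image_of_mem _ hp) rfl
  exact (hc.biUnion fun t _ => fiber_countable t).mono this

/-- The Δ-system lemma for uncountable families of finite sets of bounded size. -/
lemma delta_system (n : ℕ) : ∀ (F : Set (Finset Ordinal.{0})), ¬ F.Countable →
    (∀ a ∈ F, a.card ≤ n) →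
    ∃ (R : Finset Ordinal.{0}) (G : Set (Finset Ordinal.{0})), G ⊆ F ∧ ¬ G.Countable ∧
      ∀ a ∈ G, ∀ b ∈ G, a ≠ b → a ∩ b = R := by
  induction n with
  | zero =>
    intro F hF hcard
    exfalso
    apply hF
    apply (Set.countable_singleton (∅ : Finset Ordinal.{0})).mono
    intro a ha
    simp [Finset.card_eq_zero.mp (Nat.le_zero.mp (hcard a ha))]
  | succ n ih =>
    intro F hF hcard
    by_cases hx : ∃ x, ¬ {a ∈ F | x ∈ a}.Countable
    · obtain ⟨x, hx⟩ := hx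
      set F₀ : Set (Finset Ordinal.{0}) := {a ∈ F | x ∈ a} with hF₀def
      have hinj : Set.InjOn (fun a : Finset Ordinal.{0} => a.erase x) F₀ := by
        intro a ha b hb h
        dsimp at h
        rw [← Finset.insert_erase ha.2, h, Finset.insert_erase hb.2]
      set F' : Set (Finset Ordinal.{0}) := (fun a => a.erase x) '' F₀ with hF'def
      have hF' : ¬ F'.Countable := fun hc => hx (countable_of_injOn_image hinj hc)
      have hcard' : ∀ b ∈ F', b.card ≤ n := by
        rintro b ⟨a, ha, rfl⟩
        show (a.erase x).card ≤ n
        have h1 := Finset.card_erase_of_mem ha.2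
        have h2 := hcard a ha.1
        omega
      obtain ⟨R', G', hG'F, hG', hΔ⟩ := ih F' hF' hcard'
      refine ⟨insert x R', {a ∈ F₀ | a.erase x ∈ G'}, fun a ha => ha.1.1, ?_, ?_⟩
      · intro hc
        apply hG'
        apply (hc.image (fun a => a.erase x)).mono
        intro b hb
        obtain ⟨a, ha, rfl⟩ := hG'F hb
        exact ⟨a, ⟨ha, hb⟩, rfl⟩
      · intro a ha b hb hab
        have h1 : a.erase x ≠ b.erase x := fun h =>
          hab (by rw [← Finset.insert_erase ha.1.2, h, Finset.insert_erase hb.1.2])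
        have h2 := hΔ _ ha.2 _ hb.2 h1
        ext y
        rw [Finset.mem_inter, Finset.mem_insert]
        by_cases hy : y = x
        · subst hy; simp [ha.1.2, hb.1.2]
        · rw [← Finset.mem_inter, ← h2, Finset.mem_inter]
          simp [Finset.mem_erase, hy]
    · push_neg at hx
      have hchainub : ∀ c ⊆ {G : Set (Finset Ordinal.{0}) | G ⊆ F ∧
          G.Pairwise fun a b => a ∩ b = ∅}, IsChain (· ⊆ ·) c →
          ∃ ub ∈ {G : Set (Finset Ordinal.{0}) | G ⊆ F ∧ G.Pairwise fun a b => a ∩ b = ∅},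
            ∀ s ∈ c, s ⊆ ub := by
        intro c hc hchain
        refine ⟨⋃₀ c, ⟨?_, ?_⟩, fun s hs => Set.subset_sUnion_of_mem hs⟩
        · exact Set.sUnion_subset fun s hs => (hc hs).1
        · intro a ha b hb hab
          obtain ⟨s, hs, has⟩ := ha
          obtain ⟨u, hu, hbu⟩ := hb
          rcases hchain.total hs hu with h | h
          · exact (hc hu).2 (h has) hbu hab
          · exact (hc hs).2 has (h hbu) hab
      obtain ⟨M, hM⟩ := zorn_subset
          {G : Set (Finset Ordinal.{0}) | G ⊆ F ∧ G.Pairwise fun a b => a ∩ b = ∅} hchainub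
      refine ⟨∅, M, hM.prop.1, ?_, fun a ha b hb hab => hM.prop.2 ha hb hab⟩
      intro hMc
      apply hF
      have hU : (⋃ a ∈ M, (a : Set Ordinal.{0})).Countable :=
        hMc.biUnion fun a _ => a.countable_toSet
      have hsub : F ⊆ M ∪ ⋃ z ∈ (⋃ a ∈ M, (a : Set Ordinal.{0})), {a ∈ F | z ∈ a} := by
        intro a haF
        by_cases haM : a ∈ M
        · exact Or.inl haM
        · right
          have hins : insert a M ∉
              {G : Set (Finset Ordinal.{0}) | G ⊆ F ∧ G.Pairwise fun a b => a ∩ b = ∅} := by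
            intro hS
            exact haM (hM.eq_of_le hS (Set.subset_insert a M) ▸ Set.mem_insert a M)
          have hp : ¬ (insert a M).Pairwise fun a b => a ∩ b = ∅ := by
            intro hp
            exact hins ⟨Set.insert_subset haF hM.prop.1, hp⟩
          rw [Set.pairwise_insert] at hp
          push_neg at hp
          obtain ⟨b, hbM, hba, hne⟩ := hp (hM.prop.2)
          have : (a ∩ b).Nonempty := by
            by_cases hab : a ∩ b = ∅
            · rw [Finset.inter_comm]
              exact hne hab
            · exact Finset.nonempty_iff_ne_empty.mpr hab
          obtain ⟨z, hz⟩ := this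
          rw [Finset.mem_inter] at hz
          refine Set.mem_biUnion ?_ ⟨haF, hz.1⟩
          exact Set.mem_biUnion hbM hz.2
      exact ((hMc.union (hU.biUnion fun z _ => hx z))).mono hsub

/-- Self-compatibility. -/
lemma tennExt_self (p : TennCond) : TennExt p p :=
  ⟨subset_rfl, fun a b => ⟨fun h => ⟨h, (p.r_mem a b h).1, (p.r_mem a b h).2.1⟩, fun h => h.1⟩⟩

/-- The amalgamation lemma: two conditions whose supports intersect exactly in `R`,
whose orders agree on `R`, and none of whose non-root elements lies (ordinal-)below a
root element, are compatible — their union is a common extension. -/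
lemma amalg (R : Finset Ordinal.{0}) (p q : TennCond)
    (hpq : p.t ∩ q.t = R)
    (htr : ∀ a b, a ∈ R → b ∈ R → (p.r a b ↔ q.r a b))
    (hpR : ∀ x ∈ p.t, x ∉ R → ∀ ρ ∈ R, ¬ x < ρ)
    (hqR : ∀ x ∈ q.t, x ∉ R → ∀ ρ ∈ R, ¬ x < ρ) :
    TennCompat p q := by
  classical
  -- key: an element related below a root element is itself a root element
  have keyp : ∀ a ρ, p.r a ρ → ρ ∈ R → a ∈ R := by
    intro a ρ h hρ
    obtain ⟨ha, _, hlt⟩ := p.r_mem a ρ h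
    by_contra haR
    exact hpR a ha haR ρ hρ hlt
  have keyq : ∀ a ρ, q.r a ρ → ρ ∈ R → a ∈ R := by
    intro a ρ h hρ
    obtain ⟨ha, _, hlt⟩ := q.r_mem a ρ h
    by_contra haR
    exact hqR a ha haR ρ hρ hlt
  have memR : ∀ a, a ∈ p.t → a ∈ q.t → a ∈ R := by
    intro a h1 h2
    rw [← hpq]; exact Finset.mem_inter.mpr ⟨h1, h2⟩
  have hRp : R ⊆ p.t := by rw [← hpq]; exact Finset.inter_subset_left
  have hRq : R ⊆ q.t := by rw [← hpq]; exact Finset.inter_subset_right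
  refine ⟨⟨p.t ∪ q.t, fun a b => p.r a b ∨ q.r a b, ?_, ?_, ?_, ?_⟩, ?_, ?_⟩
  · intro a ha
    rcases Finset.mem_union.mp ha with h | h
    · exact p.mem_lt a h
    · exact q.mem_lt a h
  · rintro a b (h | h)
    · obtain ⟨h1, h2, h3⟩ := p.r_mem a b h
      exact ⟨Finset.mem_union_left _ h1, Finset.mem_union_left _ h2, h3⟩
    · obtain ⟨h1, h2, h3⟩ := q.r_mem a b h
      exact ⟨Finset.mem_union_right _ h1, Finset.mem_union_right _ h2, h3⟩
  · rintro a b c (hab | hab) (hbc | hbc)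
    · exact Or.inl (p.r_trans a b c hab hbc)
    · -- p then q : middle point is in R, hence so is a, transfer to q
      have hbR : b ∈ R := memR b (p.r_mem a b hab).2.1 (q.r_mem b c hbc).1
      have haR : a ∈ R := keyp a b hab hbR
      have : q.r a b := (htr a b haR hbR).mp hab
      exact Or.inr (q.r_trans a b c this hbc)
    · -- q then p
      have hbR : b ∈ R := memR b (p.r_mem b c hbc).1 (q.r_mem a b hab).2.1
      have haR : a ∈ R := keyq a b hab hbR
      have : p.r a b := (htr a b haR hbR).mpr hab
      exact Or.inl (p.r_trans a b c this hbc)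
    · exact Or.inr (q.r_trans a b c hab hbc)
  · rintro b a c (ha | ha) (hc | hc)
    · rcases p.r_tree b a c ha hc with h | h | h
      · exact Or.inl h
      · exact Or.inr (Or.inl (Or.inl h))
      · exact Or.inr (Or.inr (Or.inl h))
    · -- a p.r b, c q.r b : b ∈ R, hence a, c ∈ R
      have hbR : b ∈ R := memR b (p.r_mem a b ha).2.1 (q.r_mem c b hc).2.1
      have haR : a ∈ R := keyp a b ha hbR
      have hcR : c ∈ R := keyq c b hc hbR
      have hc' : p.r c b := (htr c b hcR hbR).mpr hc
      rcases p.r_tree b a c ha hc' with h | h | h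
      · exact Or.inl h
      · exact Or.inr (Or.inl (Or.inl h))
      · exact Or.inr (Or.inr (Or.inl h))
    · -- a q.r b, c p.r b
      have hbR : b ∈ R := memR b (p.r_mem c b hc).2.1 (q.r_mem a b ha).2.1
      have haR : a ∈ R := keyq a b ha hbR
      have hcR : c ∈ R := keyp c b hc hbR
      have ha' : p.r a b := (htr a b haR hbR).mpr ha
      rcases p.r_tree b a c ha' hc with h | h | h
      · exact Or.inl h
      · exact Or.inr (Or.inl (Or.inl h))
      · exact Or.inr (Or.inr (Or.inl h))
    · rcases q.r_tree b a c ha hc with h | h | h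
      · exact Or.inl h
      · exact Or.inr (Or.inl (Or.inr h))
      · exact Or.inr (Or.inr (Or.inr h))
  · -- extends p
    refine ⟨Finset.subset_union_left, fun a b => ⟨fun h => ?_, fun h => ?_⟩⟩
    · obtain ⟨h1, h2, _⟩ := p.r_mem a b h
      exact ⟨Or.inl h, h1, h2⟩
    · obtain ⟨hr, ha, hb⟩ := h
      rcases hr with h | h
      · exact h
      · have haR : a ∈ R := memR a ha (q.r_mem a b h).1
        have hbR : b ∈ R := memR b hb (q.r_mem a b h).2.1
        exact (htr a b haR hbR).mpr h
  · -- extends q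
    refine ⟨Finset.subset_union_right, fun a b => ⟨fun h => ?_, fun h => ?_⟩⟩
    · obtain ⟨h1, h2, _⟩ := q.r_mem a b h
      exact ⟨Or.inr h, h1, h2⟩
    · obtain ⟨hr, ha, hb⟩ := h
      rcases hr with h | h
      · have haR : a ∈ R := memR a (p.r_mem a b h).1 ha
        have hbR : b ∈ R := memR b (p.r_mem a b h).2.1 hb
        exact (htr a b haR hbR).mp h
      · exact h

/-- A default (empty) condition. -/
def defaultCond : TennCond :=
  ⟨∅, fun _ _ => False, fun α h => absurd h (Finset.notMem_empty α),
    fun _ _ h => h.elim, fun _ _ _ h => h.elim, fun _ _ _ h => h.elim⟩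

/-- Tennenbaum's forcing has property K: every uncountable set of conditions has an
uncountable pairwise compatible subset. -/
theorem tennenbaum_knaster :
    ∀ A : Set TennCond, ¬ A.Countable →
      ∃ B ⊆ A, ¬ B.Countable ∧ ∀ p ∈ B, ∀ q ∈ B, TennCompat p q := by
  classical
  intro A hA
  -- Step 0: fix the cardinality of the supports
  have h0 : ∃ n : ℕ, ¬ {p ∈ A | p.t.card = n}.Countable := by
    by_contra h
    push_neg at h
    apply hA
    have hsub : A ⊆ ⋃ n : ℕ, {p ∈ A | p.t.card = n} := fun p hp =>
      Set.mem_iUnion.mpr ⟨p.t.card, hp, rfl⟩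
    exact (Set.countable_iUnion h).mono hsub
  obtain ⟨n, hA0⟩ := h0
  set A₀ := {p ∈ A | p.t.card = n} with hA₀def
  -- Step 1+2: Δ-system on the supports
  have hT : ¬ ((fun p : TennCond => p.t) '' A₀).Countable := image_t_uncountable hA0
  obtain ⟨R, D, hDT, hD, hΔ⟩ := delta_system n _ hT
    (by rintro a ⟨p, hp, rfl⟩; exact le_of_eq hp.2)
  -- Step 3: restrict to conditions whose support lies in the Δ-system
  set A₁ := {p ∈ A₀ | p.t ∈ D} with hA₁def
  have hA1 : ¬ A₁.Countable := by
    intro hc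
    apply hD
    apply (hc.image (fun p : TennCond => p.t)).mono
    intro b hb
    obtain ⟨p, hp, rfl⟩ := hDT hb
    exact ⟨p, ⟨hp, hb⟩, rfl⟩
  -- Step 4: fix the trace on the root R
  have h4 : ∃ S : Finset (Ordinal.{0} × Ordinal.{0}),
      ¬ {p ∈ A₁ | trace R p = S}.Countable := by
    by_contra h
    push_neg at h
    apply hA1
    have hsub : A₁ ⊆ ⋃ S ∈ (((R ×ˢ R).powerset : Finset _) : Set _),
        {p ∈ A₁ | trace R p = S} := by
      intro p hp
      refine Set.mem_biUnion ?_ ⟨hp, rfl⟩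
      exact Finset.mem_coe.mpr (Finset.mem_powerset.mpr (Finset.filter_subset _ _))
    exact ((Finset.countable_toSet _).biUnion fun S _ => h S).mono hsub
  obtain ⟨S, hA2⟩ := h4
  set A₂ := {p ∈ A₁ | trace R p = S} with hA₂def
  have htrace : ∀ p ∈ A₂, ∀ q ∈ A₂, ∀ a b, a ∈ R → b ∈ R → (p.r a b ↔ q.r a b) := by
    intro p hp q hq a b ha hb
    constructor
    · intro h
      have h1 : (a, b) ∈ trace R p := mem_trace.mpr ⟨⟨ha, hb⟩, h⟩
      rw [hp.2] at h1
      rw [← hq.2] at h1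
      exact (mem_trace.mp h1).2
    · intro h
      have h1 : (a, b) ∈ trace R q := mem_trace.mpr ⟨⟨ha, hb⟩, h⟩
      rw [hq.2] at h1
      rw [← hp.2] at h1
      exact (mem_trace.mp h1).2
  -- elements of R are countable ordinals
  have hDnontriv : ∃ a ∈ D, ∃ b ∈ D, a ≠ b := by
    by_contra h
    push_neg at h
    exact hD (Set.Subsingleton.countable (fun a ha b hb => h a ha b hb))
  obtain ⟨a₀, ha₀, b₀, hb₀, hab₀⟩ := hDnontriv
  have hRsub : R ⊆ a₀ := by
    rw [← hΔ a₀ ha₀ b₀ hb₀ hab₀]; exact Finset.inter_subset_left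
  obtain ⟨p₀, _, hp₀t⟩ := hDT ha₀
  have hp₀t' : p₀.t = a₀ := hp₀t
  have hRlt : ∀ ρ ∈ R, ρ < omegaOne := fun ρ hρ => p₀.mem_lt ρ (by rw [hp₀t']; exact hRsub hρ)
  -- Step 5: remove the countably many conditions with a non-root element below a
  -- root element
  set Bad := {p ∈ A₂ | ∃ x ∈ p.t, x ∉ R ∧ ∃ ρ ∈ R, x < ρ} with hBaddef
  have hBadc : Bad.Countable := by
    have hsub : Bad ⊆ ⋃ ρ ∈ (R : Set Ordinal.{0}), ⋃ x ∈ Set.Iio ρ,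
        {p ∈ A₂ | x ∈ p.t ∧ x ∉ R} := by
      rintro p ⟨hpA, x, hx, hxR, ρ, hρ, hlt⟩
      exact Set.mem_biUnion hρ (Set.mem_biUnion hlt ⟨hpA, hx, hxR⟩)
    refine (Set.Countable.biUnion R.countable_toSet fun ρ hρ =>
      Set.Countable.biUnion (countable_Iio_of_lt_omegaOne (hRlt ρ hρ)) fun x _ =>
        ?_).mono hsub
    by_cases hne : {p ∈ A₂ | x ∈ p.t ∧ x ∉ R}.Nonempty
    · obtain ⟨p₁, hp₁⟩ := hne
      apply (fiber_countable p₁.t).mono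
      rintro q ⟨hqA, hqx, hqR⟩
      show q.t = p₁.t
      by_contra hne'
      have h1 : q.t ∈ D := hqA.1.2
      have h2 : p₁.t ∈ D := hp₁.1.1.2
      have h3 := hΔ _ h1 _ h2 hne'
      apply hqR
      rw [← h3]
      exact Finset.mem_inter.mpr ⟨hqx, hp₁.2.1⟩
    · rw [Set.not_nonempty_iff_eq_empty] at hne
      rw [hne]
      exact Set.countable_empty
  set A₃ := A₂ \ Bad with hA₃def
  have hA3 : ¬ A₃.Countable := by
    intro hc
    apply hA2
    have hsub : A₂ ⊆ A₃ ∪ Bad := by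
      intro p hp
      by_cases h : p ∈ Bad
      · exact Or.inr h
      · exact Or.inl ⟨hp, h⟩
    exact (hc.union hBadc).mono hsub
  -- Step 6: select one condition per support
  set img := (fun p : TennCond => p.t) '' A₃ with himgdef
  have hsel : ∀ t ∈ img, ∃ p, p ∈ A₃ ∧ p.t = t := by
    rintro t ⟨p, hp, rfl⟩; exact ⟨p, hp, rfl⟩
  set g : Finset Ordinal.{0} → TennCond := fun t =>
    if h : ∃ p, p ∈ A₃ ∧ p.t = t then h.choose else defaultCond with hgdef
  have hg : ∀ t ∈ img, g t ∈ A₃ ∧ (g t).t = t := by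
    intro t ht
    have h : ∃ p, p ∈ A₃ ∧ p.t = t := hsel t ht
    rw [hgdef]
    simp only [dif_pos h]
    exact h.choose_spec
  set B := {p : TennCond | p.t ∈ img ∧ g p.t = p} with hBdef
  have hBsub3 : B ⊆ A₃ := by
    rintro p ⟨h1, h2⟩
    rw [← h2]
    exact (hg p.t h1).1
  have hBA : B ⊆ A := fun p hp => (hBsub3 hp).1.1.1.1
  have hBunc : ¬ B.Countable := by
    intro hc
    apply image_t_uncountable hA3
    apply (hc.image (fun p : TennCond => p.t)).mono
    intro t ht
    have hmem : g t ∈ B := by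
      constructor
      · rw [(hg t ht).2]; exact ht
      · rw [(hg t ht).2]
    exact ⟨g t, hmem, (hg t ht).2⟩
  have hBinj : ∀ p ∈ B, ∀ q ∈ B, p.t = q.t → p = q := by
    intro p hp q hq h
    rw [← hp.2, ← hq.2, h]
  -- Conclusion
  refine ⟨B, hBA, hBunc, ?_⟩
  intro p hp q hq
  by_cases hpq : p = q
  · subst hpq
    exact ⟨p, tennExt_self p, tennExt_self p⟩
  · have htne : p.t ≠ q.t := fun h => hpq (hBinj p hp q hq h)
    have hp3 := hBsub3 hp
    have hq3 := hBsub3 hq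
    apply amalg R
    · exact hΔ _ hp3.1.1.2 _ hq3.1.1.2 htne
    · exact fun a b ha hb => htrace p hp3.1 q hq3.1 a b ha hb
    · intro x hx hxR ρ hρ hlt
      exact hp3.2 ⟨hp3.1, x, hx, hxR, ρ, hρ, hlt⟩
    · intro x hx hxR ρ hρ hlt
      exact hq3.2 ⟨hq3.1, x, hx, hxR, ρ, hρ, hlt⟩
end

section
/- For every regular uncountable cardinal κ there exists a set S ⊆ {α < κ : cof(α) = ω} such that both S and {α < κ : cof(α) = ω} \ S are stationary in κ; that is, κ ∩ Cof(ω) contains a subset that is stationary and co-stationary in κ ∩ Cof(ω). -/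
/-- `C` is a club subset of the regular uncountable cardinal (with ordinal) `κ`:
it is a subset of `κ`, unbounded in `κ`, and contains the supremum of each of its
nonempty subsets that is bounded below `κ`. -/
def IsClubIn (C : Set Ordinal) (κ : Ordinal) : Prop :=
  C ⊆ Set.Iio κ ∧ (∀ a < κ, ∃ b ∈ C, a ≤ b) ∧
    ∀ s ⊆ C, s.Nonempty → sSup s < κ → sSup s ∈ C

/-- `S` is stationary in `κ`: it is a subset of `κ` meeting every club subset of `κ`. -/
def IsStationaryIn (S : Set Ordinal) (κ : Ordinal) : Prop :=
  S ⊆ Set.Iio κ ∧ ∀ C, IsClubIn C κ → (S ∩ C).Nonempty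

namespace StatSplit

universe u

open Ordinal Cardinal Set Order

theorem club_Iio {κo : Ordinal} : IsClubIn (Set.Iio κo) κo :=
  ⟨subset_rfl, fun a ha => ⟨a, ha, le_rfl⟩, fun _ _ _ h => h⟩

/-- Key iteration lemma: through any `< κ`-indexed family of clubs, above any point,
there is a common member of cofinality `ω`. -/
theorem exists_cofOmega_mem_inter {κ : Cardinal.{u}} (hreg : κ.IsRegular)
    (hunc : Cardinal.aleph0 < κ)
    {ι : Type u} (C : ι → Set Ordinal.{u}) (hC : ∀ i, IsClubIn (C i) κ.ord)
    (hι : #ι < κ) {a : Ordinal.{u}} (ha : a < κ.ord) :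
    ∃ lam, a ≤ lam ∧ lam < κ.ord ∧ lam.cof = Cardinal.aleph0 ∧ ∀ i, lam ∈ C i := by
  have hlim : IsSuccLimit κ.ord := Cardinal.isSuccLimit_ord hunc.le
  have hcof : Cardinal.aleph0 < κ.ord.cof := by rwa [hreg.cof_eq]
  have hιcof : #ι < κ.ord.cof := by rwa [hreg.cof_eq]
  have step : ∀ γ < κ.ord, ∃ δ, γ < δ ∧ δ < κ.ord ∧ ∀ i, ∃ b ∈ C i, γ < b ∧ b ≤ δ := by
    intro γ hγ
    have h1 : succ γ < κ.ord := hlim.succ_lt hγ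
    choose b hb hble using fun i => (hC i).2.1 (succ γ) h1
    have hblt : ∀ i, b i < κ.ord := fun i => (hC i).1 (hb i)
    refine ⟨(⨆ i, b i) ⊔ succ γ, lt_of_lt_of_le (lt_succ γ) le_sup_right,
      max_lt (Ordinal.iSup_lt_ord hιcof hblt) h1, fun i => ⟨b i, hb i,
        (lt_succ γ).trans_le (hble i), le_trans (Ordinal.le_iSup b i) le_sup_left⟩⟩
  let next : {o : Ordinal.{u} // o < κ.ord} → {o : Ordinal.{u} // o < κ.ord} := fun p =>
    ⟨(step p.1 p.2).choose, (step p.1 p.2).choose_spec.2.1⟩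
  let x : ℕ → {o : Ordinal.{u} // o < κ.ord} := fun n => next^[n] ⟨a, ha⟩
  have hx0 : (x 0).1 = a := rfl
  have hxs : ∀ n, x (n + 1) = next (x n) := fun n => Function.iterate_succ_apply' next n _
  have hlt : ∀ n, (x n).1 < (x (n + 1)).1 := by
    intro n; rw [hxs n]; exact (step (x n).1 (x n).2).choose_spec.1
  have hmem : ∀ n i, ∃ b ∈ C i, (x n).1 < b ∧ b ≤ (x (n + 1)).1 := by
    intro n i; rw [hxs n]; exact (step (x n).1 (x n).2).choose_spec.2.2 i
  have hmono : StrictMono fun n => (x n).1 := strictMono_nat_of_lt_succ hlt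
  set lam := ⨆ n, (x n).1 with hlam
  have hlamκ : lam < κ.ord :=
    Ordinal.iSup_lt_ord_lift (by simpa using hcof) fun n => (x n).2
  have hle : ∀ n, (x n).1 ≤ lam := fun n => Ordinal.le_iSup (fun n => (x n).1) n
  have hltlam : ∀ n, (x n).1 < lam := fun n => (hlt n).trans_le (hle (n + 1))
  have hlim2 : IsSuccLimit lam := by
    rw [Ordinal.isSuccLimit_iff, isSuccPrelimit_iff_succ_lt]
    refine ⟨fun h0 => ?_, fun b hb => ?_⟩
    · exact absurd (hltlam 0) (by simp [h0])
    · obtain ⟨n, hn⟩ := Ordinal.lt_iSup_iff.1 hb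
      exact (succ_le_of_lt hn).trans_lt (hltlam n)
  have hcoflam : lam.cof = Cardinal.aleph0 := by
    apply le_antisymm
    · have := Ordinal.cof_iSup_le_lift (f := fun n => (x n).1) hltlam
      simpa using this
    · exact (Ordinal.aleph0_le_cof).2 hlim2
  refine ⟨lam, hx0 ▸ hle 0, hlamκ, hcoflam, fun i => ?_⟩
  set s := C i ∩ Set.Ioc a lam with hs
  have hsub : s ⊆ C i := Set.inter_subset_left
  have hne : s.Nonempty := by
    obtain ⟨b, hbC, hb1, hb2⟩ := hmem 0 i
    exact ⟨b, hbC, hx0 ▸ hb1, hb2.trans (hle 1)⟩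
  have hbdd : BddAbove s := ⟨lam, fun y hy => hy.2.2⟩
  have hsup : sSup s = lam := by
    apply le_antisymm (csSup_le hne fun y hy => hy.2.2)
    rw [hlam]
    refine Ordinal.iSup_le_iff.2 fun n => ?_
    obtain ⟨b, hbC, hb1, hb2⟩ := hmem n i
    have hbs : b ∈ s := ⟨hbC, (hx0 ▸ hmono.monotone (Nat.zero_le n)).trans_lt hb1,
      hb2.trans (hle (n + 1))⟩
    exact (hb1.le).trans (le_csSup hbdd hbs)
  have := (hC i).2.2 s hsub hne (hsup ▸ hlamκ)
  rwa [hsup] at this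

/-- The diagonal intersection of a `κ.ord`-indexed family of clubs is club. -/
theorem isClubIn_diag {κ : Cardinal.{u}} (hreg : κ.IsRegular)
    (hunc : Cardinal.aleph0 < κ) (D : Ordinal.{u} → Set Ordinal.{u})
    (hD : ∀ β, IsClubIn (D β) κ.ord) :
    IsClubIn {α : Ordinal | α < κ.ord ∧ ∀ β < α, α ∈ D β} κ.ord := by
  have hlim : IsSuccLimit κ.ord := Cardinal.isSuccLimit_ord hunc.le
  refine ⟨fun α hα => hα.1, ?_, ?_⟩
  · -- unboundedness
    intro a ha
    have step : ∀ γ < κ.ord, ∃ δ, γ < δ ∧ δ < κ.ord ∧ ∀ β ≤ γ, δ ∈ D β := by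
      intro γ hγ
      have hsγ : succ γ < κ.ord := hlim.succ_lt hγ
      obtain ⟨lam, hge, hlt, _, hmem⟩ := exists_cofOmega_mem_inter hreg hunc
        (ι := (succ γ).ToType) (fun i => D ((Ordinal.ToType.mk (o := succ γ)).symm i).1)
        (fun i => hD _) (by rw [Cardinal.mk_toType]; exact Cardinal.lt_ord.1 hsγ) hsγ
      refine ⟨lam, (lt_succ γ).trans_le hge, hlt, fun β hβ => ?_⟩
      have hβ' : β < succ γ := lt_succ_iff.2 hβ
      have := hmem (Ordinal.ToType.mk (o := succ γ) ⟨β, hβ'⟩)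
      simpa using this
    let next : {o : Ordinal.{u} // o < κ.ord} → {o : Ordinal.{u} // o < κ.ord} := fun p =>
      ⟨(step p.1 p.2).choose, (step p.1 p.2).choose_spec.2.1⟩
    let x : ℕ → {o : Ordinal.{u} // o < κ.ord} := fun n => next^[n] ⟨a, ha⟩
    have hx0 : (x 0).1 = a := rfl
    have hxs : ∀ n, x (n + 1) = next (x n) := fun n => Function.iterate_succ_apply' next n _
    have hlt : ∀ n, (x n).1 < (x (n + 1)).1 := by
      intro n; rw [hxs n]; exact (step (x n).1 (x n).2).choose_spec.1
    have hmem : ∀ n β, β ≤ (x n).1 → (x (n + 1)).1 ∈ D β := by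
      intro n β hβ; rw [hxs n]; exact (step (x n).1 (x n).2).choose_spec.2.2 β hβ
    have hmono : StrictMono fun n => (x n).1 := strictMono_nat_of_lt_succ hlt
    set lam := ⨆ n, (x n).1 with hlam
    have hcof : Cardinal.aleph0 < κ.ord.cof := by rwa [hreg.cof_eq]
    have hlamκ : lam < κ.ord :=
      Ordinal.iSup_lt_ord_lift (by simpa using hcof) fun n => (x n).2
    have hle : ∀ n, (x n).1 ≤ lam := fun n => Ordinal.le_iSup (fun n => (x n).1) n
    have hltlam : ∀ n, (x n).1 < lam := fun n => (hlt n).trans_le (hle (n + 1))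
    refine ⟨lam, ⟨hlamκ, fun β hβ => ?_⟩, hx0 ▸ hle 0⟩
    obtain ⟨n, hn⟩ := Ordinal.lt_iSup_iff.1 hβ
    set s := (fun m => (x m).1) '' Set.Ici (n + 1) with hs
    have hsub : s ⊆ D β := by
      rintro _ ⟨m, hm, rfl⟩
      obtain ⟨k, rfl⟩ : ∃ k, m = (n + k) + 1 := ⟨m - n - 1, by simp at hm; omega⟩
      exact hmem _ β (hn.le.trans (hmono.monotone (Nat.le_add_right n k)))
    have hne : s.Nonempty := ⟨(x (n + 1)).1, (n + 1), Set.self_mem_Ici, rfl⟩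
    have hbdd : BddAbove s := ⟨lam, by rintro _ ⟨m, _, rfl⟩; exact hle m⟩
    have hsup : sSup s = lam := by
      apply le_antisymm (csSup_le hne (by rintro _ ⟨m, _, rfl⟩; exact hle m))
      rw [hlam]
      refine Ordinal.iSup_le_iff.2 fun k => ?_
      have : (x k).1 ≤ (x (max k (n + 1))).1 := hmono.monotone (le_max_left _ _)
      exact this.trans (le_csSup hbdd ⟨max k (n + 1), Set.mem_Ici.2 (le_max_right _ _), rfl⟩)
    have := (hD β).2.2 s hsub hne (hsup ▸ hlamκ)
    rwa [hsup] at this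
  · -- closedness
    intro s hsub hne hlt
    set μ := sSup s with hμ
    refine ⟨hlt, fun β hβ => ?_⟩
    have hbdd : BddAbove s := ⟨μ, fun y hy => le_csSup ⟨κ.ord, fun z hz => (hsub hz).1.le⟩ hy⟩
    have hbdd' : BddAbove s := ⟨κ.ord, fun z hz => (hsub hz).1.le⟩
    obtain ⟨x₀, hx₀s, hx₀⟩ := (lt_csSup_iff hbdd' hne).1 hβ
    set s' := s ∩ Set.Ioi β with hs'
    have hsub' : s' ⊆ D β := fun y hy => (hsub hy.1).2 β hy.2
    have hne' : s'.Nonempty := ⟨x₀, hx₀s, hx₀⟩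
    have hsup' : sSup s' = μ := by
      apply le_antisymm (csSup_le_csSup hbdd' hne' Set.inter_subset_left)
      refine csSup_le hne fun y hy => ?_
      rcases le_or_gt y β with h | h
      · exact h.trans (hx₀.le.trans (le_csSup (hbdd'.mono Set.inter_subset_left) ⟨hx₀s, hx₀⟩))
      · exact le_csSup (hbdd'.mono Set.inter_subset_left) ⟨hy, h⟩
    have := (hD β).2.2 s' hsub' hne' (hsup' ▸ hlt)
    rwa [hsup'] at this

/-- A cofinality-`ω` ordinal has an `ω`-indexed cofinal sequence. -/
theorem exists_omega_seq {α : Ordinal.{u}} (h : α.cof = Cardinal.aleph0) :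
    ∃ g : ℕ → Ordinal.{u}, (∀ n, g n < α) ∧ ∀ δ < α, ∃ n, δ ≤ g n := by
  obtain ⟨ι, f, hf, hι⟩ := Ordinal.exists_lsub_cof α
  rw [h] at hι
  have : #ι = #(ULift.{u} ℕ) := by simpa using hι
  obtain ⟨e⟩ := Cardinal.eq.1 this
  refine ⟨fun n => f (e.symm ⟨n⟩), fun n => hf ▸ Ordinal.lt_lsub _ _, fun δ hδ => ?_⟩
  rw [← hf] at hδ
  obtain ⟨i, hi⟩ := Ordinal.lt_lsub_iff.1 hδ
  refine ⟨(e i).down, ?_⟩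
  show δ ≤ f (e.symm ⟨(e i).down⟩)
  have h2 : e.symm (⟨(e i).down⟩ : ULift.{u} ℕ) = i := e.symm_apply_apply i
  rw [h2]
  exact hi

end StatSplit

open StatSplit

/-- For every regular uncountable cardinal `κ` there is a set of cofinality-`ω` ordinals
below `κ` which is stationary and co-stationary in `κ ∩ Cof(ω)`. -/
theorem exists_stationary_costationary_cof_omega
    (κ : Cardinal) (hreg : κ.IsRegular) (hunc : Cardinal.aleph0 < κ) :
    ∃ S ⊆ {α : Ordinal | α < κ.ord ∧ α.cof = Cardinal.aleph0},
      IsStationaryIn S κ.ord ∧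
      IsStationaryIn ({α : Ordinal | α < κ.ord ∧ α.cof = Cardinal.aleph0} \ S) κ.ord := by
  have hlim : Order.IsSuccLimit κ.ord := Cardinal.isSuccLimit_ord hunc.le
  have hcof : Cardinal.aleph0 < κ.ord.cof := by rwa [hreg.cof_eq]
  set S0 : Set Ordinal := {α : Ordinal | α < κ.ord ∧ α.cof = Cardinal.aleph0} with hS0
  have hS0sub : S0 ⊆ Set.Iio κ.ord := fun α hα => hα.1
  have hS0stat : IsStationaryIn S0 κ.ord := by
    refine ⟨hS0sub, fun C hC => ?_⟩
    obtain ⟨lam, _, h1, h2, h3⟩ := exists_cofOmega_mem_inter hreg hunc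
      (fun _ : PUnit => C) (fun _ => hC)
      (by rw [Cardinal.mk_punit]; exact Cardinal.one_lt_aleph0.trans hunc) hlim.pos
    exact ⟨lam, ⟨h1, h2⟩, h3 PUnit.unit⟩
  -- choose fundamental sequences
  have hfex : ∀ α : Ordinal, ∃ g : ℕ → Ordinal,
      α.cof = Cardinal.aleph0 → (∀ n, g n < α) ∧ ∀ δ < α, ∃ n, δ ≤ g n := by
    intro α
    by_cases h : α.cof = Cardinal.aleph0
    · obtain ⟨g, h1, h2⟩ := exists_omega_seq h; exact ⟨g, fun _ => ⟨h1, h2⟩⟩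
    · exact ⟨fun _ => 0, fun hh => absurd hh h⟩
  choose f hf using hfex
  -- Claim A : some coordinate is everywhere-large on a stationary set
  have claimA : ∃ n : ℕ, ∀ β < κ.ord,
      IsStationaryIn {α | α ∈ S0 ∧ β ≤ f α n} κ.ord := by
    by_contra hcon
    push_neg at hcon
    have hcon' : ∀ n : ℕ, ∃ β < κ.ord, ∃ C, IsClubIn C κ.ord ∧
        ∀ α, α ∈ S0 → β ≤ f α n → α ∉ C := by
      intro n
      obtain ⟨β, hβ, hns⟩ := hcon n
      refine ⟨β, hβ, ?_⟩
      rw [IsStationaryIn] at hns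
      push_neg at hns
      obtain ⟨C, hC, hemp⟩ := hns fun α hα => hα.1.1
      exact ⟨C, hC, fun α h1 h2 hmem => Set.eq_empty_iff_forall_notMem.1 hemp α ⟨⟨h1, h2⟩, hmem⟩⟩
    choose β hβκ C hC hdisj using hcon'
    have hBκ : (⨆ n, β n) < κ.ord :=
      Ordinal.iSup_lt_ord_lift (by simpa using hcof) hβκ
    have hB1 : Order.succ (⨆ n, β n) < κ.ord := hlim.succ_lt hBκ
    obtain ⟨lam, hge, hltκ, hcofl, hmem⟩ := exists_cofOmega_mem_inter hreg hunc
      (fun i : ULift.{u_1} ℕ => C i.down) (fun i => hC i.down)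
      (by simpa using hunc) hB1
    have hlamS0 : lam ∈ S0 := ⟨hltκ, hcofl⟩
    have hBlam : (⨆ n, β n) < lam := (Order.lt_succ _).trans_le hge
    obtain ⟨n, hn⟩ := (hf lam hcofl).2 _ hBlam
    have h1 : ¬ (β n ≤ f lam n) := fun hle => hdisj n lam hlamS0 hle (hmem ⟨n⟩)
    exact ((hn.trans_lt (not_le.1 h1)).not_ge (Ordinal.le_iSup β n)).elim
  obtain ⟨nn, hnn⟩ := claimA
  -- Fodor-lite: the nn-th coordinate is bounded on a stationary set
  have fodor : ∃ β < κ.ord, IsStationaryIn {α | α ∈ S0 ∧ f α nn < β} κ.ord := by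
    by_contra hcon
    push_neg at hcon
    have hcon' : ∀ b : Ordinal, ∃ D, IsClubIn D κ.ord ∧
        (b < κ.ord → ∀ α, α ∈ S0 → f α nn < b → α ∉ D) := by
      intro b
      by_cases hb : b < κ.ord
      · have hns := hcon b hb
        rw [IsStationaryIn] at hns
        push_neg at hns
        obtain ⟨D, hD, hemp⟩ := hns fun α hα => hα.1.1
        exact ⟨D, hD, fun _ α h1 h2 hmem =>
          Set.eq_empty_iff_forall_notMem.1 hemp α ⟨⟨h1, h2⟩, hmem⟩⟩
      · exact ⟨Set.Iio κ.ord, club_Iio, fun hb' => absurd hb' hb⟩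
    choose D hDclub hDdisj using hcon'
    obtain ⟨α, hαS0, hαdiag⟩ := hS0stat.2 _ (isClubIn_diag hreg hunc D hDclub)
    have hαlim : Order.IsSuccLimit α := Ordinal.aleph0_le_cof.1 (le_of_eq hαS0.2.symm)
    have h1 : f α nn < α := (hf α hαS0.2).1 nn
    have h2 : Order.succ (f α nn) < α := hαlim.succ_lt h1
    exact hDdisj (Order.succ (f α nn)) (h2.trans hαS0.1) α hαS0 (Order.lt_succ _)
      (hαdiag.2 _ h2)
  obtain ⟨β, hβκ, hT⟩ := fodor
  refine ⟨{α | α ∈ S0 ∧ β ≤ f α nn}, fun α hα => hα.1, hnn β hβκ, ?_⟩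
  have heq : S0 \ {α | α ∈ S0 ∧ β ≤ f α nn} = {α | α ∈ S0 ∧ f α nn < β} := by
    ext α
    simp only [Set.mem_diff, Set.mem_setOf_eq, not_and, not_le]
    constructor
    · rintro ⟨h1, h2⟩; exact ⟨h1, h2 h1⟩
    · rintro ⟨h1, h2⟩; exact ⟨h1, fun _ => h2⟩
  rw [heq]
  exact hT
end
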